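/- Consider the linear system for (φ, μ, r) in H²(Ω) × H²(Ω) × ℝ (with homogeneous Neumann boundary conditions for φ and μ): φ = τ div(m ∇μ), μ = −ε Δφ + (r/(εQ)) b, r = (1/(2εQ)) ∫_Ω b φ dx, where τ, ε, Q > 0 are constants, m ∈ L∞(Ω) with m ≥ m0 > 0, and b ∈ L²(Ω) is given. Then the only solution is φ = 0, μ = 0, r = 0. -/

import Mathlib

open MeasureTheory

private lemma eqOn_zero_of_ae_zero {d : ℕ} {Ω : Set (EuclideanSpace ℝ (Fin d))} (hΩ : IsOpen Ω)
    {f : EuclideanSpace ℝ (Fin d) → ℝ} (hf : Continuous f)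
    (h : f =ᵐ[volume.restrict Ω] 0) : Set.EqOn f 0 Ω := by
  intro x hx
  by_contra hne
  have hU : IsOpen (Ω ∩ {y | f y ≠ 0}) := hΩ.inter (isOpen_ne_fun hf continuous_const)
  have hpos : 0 < volume (Ω ∩ {y | f y ≠ 0}) := hU.measure_pos volume ⟨x, hx, hne⟩
  have h0 : volume.restrict Ω {y | f y ≠ 0} = 0 := by
    simpa [Filter.EventuallyEq, ae_iff] using h
  have h1 : volume (Ω ∩ {y | f y ≠ 0}) = 0 := by
    rw [Measure.restrict_apply₀' hΩ.measurableSet.nullMeasurableSet] at h0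
    rw [Set.inter_comm]; exact h0
  simp [h1] at hpos

private lemma cont_integrableOn {d : ℕ} {Ω : Set (EuclideanSpace ℝ (Fin d))}
    (hΩbdd : Bornology.IsBounded Ω) {f : EuclideanSpace ℝ (Fin d) → ℝ}
    (hf : Continuous f) : IntegrableOn f Ω :=
  (hf.continuousOn.integrableOn_compact hΩbdd.isCompact_closure).mono_set subset_closure

set_option maxHeartbeats 1000000 in
theorem stmt_16 {d : ℕ} (Ω : Set (EuclideanSpace ℝ (Fin d)))
    (hΩopen : IsOpen Ω) (hΩbdd : Bornology.IsBounded Ω)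
    (τ ε Q m0 m1 : ℝ) (hτ : 0 < τ) (hε : 0 < ε) (hQ : 0 < Q) (hm0 : 0 < m0)
    (m : EuclideanSpace ℝ (Fin d) → ℝ) (hmmeas : Measurable m)
    (hm : ∀ x ∈ Ω, m0 ≤ m x ∧ m x ≤ m1)
    (b : EuclideanSpace ℝ (Fin d) → ℝ) (hb : MemLp b 2 (volume.restrict Ω))
    (φ μ : EuclideanSpace ℝ (Fin d) → ℝ) (r : ℝ)
    (hφ : ContDiff ℝ 2 φ) (hμ : ContDiff ℝ 2 μ)
    (weak1 : ∀ ψ : EuclideanSpace ℝ (Fin d) → ℝ, ContDiff ℝ 1 ψ →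
      ∫ x in Ω, φ x * ψ x =
        -(τ * ∫ x in Ω, m x * (inner ℝ (gradient μ x) (gradient ψ x) : ℝ)))
    (weak2 : ∀ ψ : EuclideanSpace ℝ (Fin d) → ℝ, ContDiff ℝ 1 ψ →
      ∫ x in Ω, μ x * ψ x =
        ε * (∫ x in Ω, (inner ℝ (gradient φ x) (gradient ψ x) : ℝ))
          + (r / (ε * Q)) * ∫ x in Ω, b x * ψ x)
    (hr : r = (1 / (2 * ε * Q)) * ∫ x in Ω, b x * φ x) :
    Set.EqOn φ 0 Ω ∧ Set.EqOn μ 0 Ω ∧ r = 0 := by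
  have hΩm : MeasurableSet Ω := hΩopen.measurableSet
  have hfin : volume Ω < ⊤ :=
    lt_of_le_of_lt (measure_mono subset_closure) hΩbdd.isCompact_closure.measure_lt_top
  haveI : IsFiniteMeasure (volume.restrict Ω) :=
    ⟨by rwa [Measure.restrict_apply_univ]⟩
  have hgφ : Continuous (gradient φ) :=
    (InnerProductSpace.toDual ℝ _).symm.continuous.comp (hφ.continuous_fderiv two_ne_zero)
  have hgμ : Continuous (gradient μ) :=
    (InnerProductSpace.toDual ℝ _).symm.continuous.comp (hμ.continuous_fderiv two_ne_zero)
  set A := ∫ x in Ω, m x * (inner ℝ (gradient μ x) (gradient μ x) : ℝ) with hA_def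
  set B := ∫ x in Ω, (inner ℝ (gradient φ x) (gradient φ x) : ℝ) with hB_def
  -- integrability of the A-integrand
  have hmeasA : AEStronglyMeasurable
      (fun x => m x * (inner ℝ (gradient μ x) (gradient μ x) : ℝ)) (volume.restrict Ω) :=
    (hmmeas.aestronglyMeasurable.mul (hgμ.inner hgμ).aestronglyMeasurable)
  obtain ⟨C, hC⟩ := hΩbdd.isCompact_closure.exists_bound_of_continuousOn
    (f := fun x => (inner ℝ (gradient μ x) (gradient μ x) : ℝ)) (hgμ.inner hgμ).continuousOn
  have hintA : IntegrableOn
      (fun x => m x * (inner ℝ (gradient μ x) (gradient μ x) : ℝ)) Ω := by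
    refine Integrable.mono' (g := fun _ => max m1 0 * max C 0)
      (integrable_const _) hmeasA ?_
    filter_upwards [ae_restrict_mem hΩm] with x hx
    have h1 : |m x| ≤ max m1 0 := by
      rw [abs_of_nonneg (le_trans hm0.le (hm x hx).1)]
      exact le_max_of_le_left (hm x hx).2
    have h2 : |(inner ℝ (gradient μ x) (gradient μ x) : ℝ)| ≤ max C 0 :=
      le_max_of_le_left (by simpa using hC x (subset_closure hx))
    calc ‖m x * (inner ℝ (gradient μ x) (gradient μ x) : ℝ)‖
        = |m x| * |(inner ℝ (gradient μ x) (gradient μ x) : ℝ)| := abs_mul _ _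
      _ ≤ max m1 0 * max C 0 := mul_le_mul h1 h2 (abs_nonneg _) (le_max_right _ _)
  have hintB : IntegrableOn (fun x => (inner ℝ (gradient φ x) (gradient φ x) : ℝ)) Ω :=
    cont_integrableOn hΩbdd (hgφ.inner hgφ)
  -- energy identity
  have e1 := weak1 μ (hμ.of_le one_le_two)
  have e2 := weak2 φ (hφ.of_le one_le_two)
  have hcomm : ∫ x in Ω, μ x * φ x = ∫ x in Ω, φ x * μ x := by
    apply integral_congr_ae; filter_upwards with x; ring
  have hJ : ∫ x in Ω, b x * φ x = 2 * ε * Q * r := by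
    rw [hr]; field_simp
  have key : -(τ * A) = ε * B + 2 * r ^ 2 := by
    rw [← e1, ← hcomm, e2, hJ]
    have : r / (ε * Q) * (2 * ε * Q * r) = 2 * r ^ 2 := by
      field_simp
    rw [this]
  have hA : 0 ≤ A := setIntegral_nonneg hΩm fun x hx =>
    mul_nonneg (le_trans hm0.le (hm x hx).1) real_inner_self_nonneg
  have hB : 0 ≤ B := setIntegral_nonneg hΩm fun x _ => real_inner_self_nonneg
  have hτA : 0 ≤ τ * A := mul_nonneg hτ.le hA
  have hεB : 0 ≤ ε * B := mul_nonneg hε.le hB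
  have hr0 : r = 0 := by nlinarith [sq_nonneg r]
  have hA0 : A = 0 := by
    have : τ * A = 0 := by nlinarith [sq_nonneg r]
    exact (mul_eq_zero.mp this).resolve_left hτ.ne'
  have hB0 : B = 0 := by
    have : ε * B = 0 := by nlinarith [sq_nonneg r]
    exact (mul_eq_zero.mp this).resolve_left hε.ne'
  -- gradients vanish a.e. on Ω
  have hAae : (fun x => m x * (inner ℝ (gradient μ x) (gradient μ x) : ℝ))
      =ᵐ[volume.restrict Ω] 0 := by
    refine (integral_eq_zero_iff_of_nonneg_ae ?_ hintA).mp hA0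
    filter_upwards [ae_restrict_mem hΩm] with x hx
    exact mul_nonneg (le_trans hm0.le (hm x hx).1) real_inner_self_nonneg
  have hgμ0 : (fun x => gradient μ x) =ᵐ[volume.restrict Ω] 0 := by
    filter_upwards [hAae, ae_restrict_mem hΩm] with x hx hxΩ
    have hmx : 0 < m x := lt_of_lt_of_le hm0 (hm x hxΩ).1
    have : (inner ℝ (gradient μ x) (gradient μ x) : ℝ) = 0 := by
      rcases mul_eq_zero.mp hx with h | h
      · exact absurd h hmx.ne'
      · exact h
    exact inner_self_eq_zero.mp this
  have hBae : (fun x => (inner ℝ (gradient φ x) (gradient φ x) : ℝ))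
      =ᵐ[volume.restrict Ω] 0 :=
    (integral_eq_zero_iff_of_nonneg_ae
      (Filter.Eventually.of_forall fun x => real_inner_self_nonneg) hintB).mp hB0
  have hgφ0 : (fun x => gradient φ x) =ᵐ[volume.restrict Ω] 0 := by
    filter_upwards [hBae] with x hx
    exact inner_self_eq_zero.mp hx
  -- conclude μ = 0 on Ω
  have eμ := weak2 μ (hμ.of_le one_le_two)
  have hcross : ∫ x in Ω, (inner ℝ (gradient φ x) (gradient μ x) : ℝ) = 0 := by
    rw [← integral_zero]
    apply integral_congr_ae
    filter_upwards [hgφ0] with x hx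
    simp [hx]
  have hμμ : ∫ x in Ω, μ x * μ x = 0 := by
    rw [eμ, hcross, hr0]; ring
  have hμae : μ =ᵐ[volume.restrict Ω] 0 := by
    have := (integral_eq_zero_iff_of_nonneg_ae
      (Filter.Eventually.of_forall fun x => mul_self_nonneg (μ x))
      (cont_integrableOn hΩbdd ((hμ.continuous).mul (hμ.continuous)))).mp hμμ
    filter_upwards [this] with x hx
    exact mul_self_eq_zero.mp hx
  -- conclude φ = 0 on Ω
  have eφ := weak1 φ (hφ.of_le one_le_two)
  have hcross2 : ∫ x in Ω, m x * (inner ℝ (gradient μ x) (gradient φ x) : ℝ) = 0 := by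
    rw [← integral_zero]
    apply integral_congr_ae
    filter_upwards [hgμ0] with x hx
    simp [hx]
  have hφφ : ∫ x in Ω, φ x * φ x = 0 := by
    rw [eφ, hcross2]; ring
  have hφae : φ =ᵐ[volume.restrict Ω] 0 := by
    have := (integral_eq_zero_iff_of_nonneg_ae
      (Filter.Eventually.of_forall fun x => mul_self_nonneg (φ x))
      (cont_integrableOn hΩbdd ((hφ.continuous).mul (hφ.continuous)))).mp hφφ
    filter_upwards [this] with x hx
    exact mul_self_eq_zero.mp hx
  exact ⟨eqOn_zero_of_ae_zero hΩopen hφ.continuous hφae,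
    eqOn_zero_of_ae_zero hΩopen hμ.continuous hμae, hr0⟩
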